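/- Let γ ∈ ℂ and ρ > 0 with |γ| ≥ ρ, and let n ∈ ℕ. Then: (a) every complex polynomial P of degree at most n with P(γ) = 1 satisfies sup_{|z| = ρ} |P(z)| ≥ (ρ/|γ|)^n; (b) the polynomial P(z) = (z/γ)^n satisfies P(γ) = 1 and sup_{|z| = ρ} |P(z)| = (ρ/|γ|)^n, so the bound in (a) is attained. -/

import Mathlib

open Polynomial Metric Set

/-- Let γ ∈ ℂ and ρ > 0 with |γ| ≥ ρ, and let n ∈ ℕ. Then:
(a) every complex polynomial P of degree at most n with P(γ) = 1 satisfies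
sup_{|z| = ρ} |P(z)| ≥ (ρ/|γ|)^n; (b) the polynomial P(z) = (z/γ)^n satisfies P(γ) = 1 and
sup_{|z| = ρ} |P(z)| = (ρ/|γ|)^n, so the bound in (a) is attained. -/
theorem stmt_14
    (γ : ℂ) (ρ : ℝ) (hρ : 0 < ρ) (hγ : ρ ≤ ‖γ‖) (n : ℕ) :
    (∀ P : Polynomial ℂ, P.degree ≤ n → P.eval γ = 1 →
      (ρ / ‖γ‖) ^ n ≤
        sSup ((fun z => ‖P.eval z‖) '' Metric.sphere (0 : ℂ) ρ)) ∧
    ((Polynomial.C γ⁻¹ * Polynomial.X : Polynomial ℂ) ^ n).eval γ = 1 ∧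
    sSup ((fun z => ‖((Polynomial.C γ⁻¹ * Polynomial.X : Polynomial ℂ) ^ n).eval z‖)
        '' Metric.sphere (0 : ℂ) ρ)
      = (ρ / ‖γ‖) ^ n := by
  have hγ0 : (0:ℝ) < ‖γ‖ := lt_of_lt_of_le hρ hγ
  have hγne : γ ≠ 0 := by
    intro h; rw [h] at hγ0; simp at hγ0
  constructor
  · intro P hdeg heval
    set r : ℝ := ‖γ‖ / ρ with hr
    have hr0 : 0 < r := div_pos hγ0 hρ
    have hr1 : 1 ≤ r := (one_le_div hρ).2 hγ
    set M : ℝ := sSup ((fun z => ‖P.eval z‖) '' Metric.sphere (0 : ℂ) ρ) with hM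
    have hbdd : BddAbove ((fun z => ‖P.eval z‖) '' Metric.sphere (0 : ℂ) ρ) :=
      (isCompact_sphere 0 ρ).bddAbove_image
        (Continuous.continuousOn (by continuity))
    have hndeg : P.natDegree < n + 1 :=
      Nat.lt_succ_of_le (Polynomial.natDegree_le_iff_degree_le.2 hdeg)
    -- the reversed polynomial
    set Q : Polynomial ℂ := ∑ k ∈ Finset.range (n+1), C (P.coeff k * γ ^ k) * X ^ (n - k) with hQ
    have hQ1 : Q.eval 1 = 1 := by
      rw [hQ]
      simp only [eval_finset_sum, eval_mul, eval_C, eval_pow, eval_X, one_pow, mul_one]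
      rw [← Polynomial.eval_eq_sum_range' hndeg, heval]
    have hQw : ∀ w : ℂ, w ≠ 0 → Q.eval w = w ^ n * P.eval (γ / w) := by
      intro w hw
      rw [hQ, Polynomial.eval_eq_sum_range' hndeg]
      simp only [eval_finset_sum, eval_mul, eval_C, eval_pow, eval_X, Finset.mul_sum]
      refine Finset.sum_congr rfl fun k hk => ?_
      have hk' : k ≤ n := Nat.lt_succ_iff.1 (Finset.mem_range.1 hk)
      have hw2 : w ^ n = w ^ (n - k) * w ^ k := by
        rw [← pow_add, Nat.sub_add_cancel hk']
      rw [div_pow, hw2]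
      field_simp
    -- maximum modulus
    have key : ‖Q.eval 1‖ ≤ r ^ n * M := by
      have := Complex.norm_le_of_forall_mem_frontier_norm_le
        (U := Metric.ball (0:ℂ) r) (z := (1:ℂ)) isBounded_ball
        (Differentiable.diffContOnCl (Q.differentiable)) (C := r ^ n * M) ?_ ?_
      · simpa using this
      · intro w hw
        rw [frontier_ball _ (ne_of_gt hr0)] at hw
        have hwabs : ‖w‖ = r := by simpa using hw
        have hwne : w ≠ 0 := by
          intro h; rw [h] at hwabs; simp at hwabs; exact ne_of_gt hr0 hwabs.symm
        rw [hQw w hwne, norm_mul, norm_pow, hwabs]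
        refine mul_le_mul_of_nonneg_left ?_ (by positivity)
        refine le_csSup hbdd ?_
        refine ⟨γ / w, ?_, rfl⟩
        simp only [mem_sphere_iff_norm, sub_zero, norm_div, hwabs]
        field_simp [hr]
        rw [hr]; field_simp
      · rw [closure_ball _ (ne_of_gt hr0)]
        simpa using hr1
    rw [hQ1] at key
    simp only [norm_one] at key
    have : (ρ / ‖γ‖) ^ n = (r ^ n)⁻¹ := by
      rw [← inv_pow]; congr 1; rw [hr]; field_simp
    rw [this, inv_le_iff_one_le_mul₀ (by positivity)]
    linarith [key]
  constructor
  · simp [hγne]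
  · have himg : (fun z => ‖((Polynomial.C γ⁻¹ * Polynomial.X : Polynomial ℂ) ^ n).eval z‖)
        '' Metric.sphere (0 : ℂ) ρ = {(ρ / ‖γ‖) ^ n} := by
      have hne : (Metric.sphere (0:ℂ) ρ).Nonempty :=
        NormedSpace.sphere_nonempty.2 (le_of_lt hρ)
      rw [show (fun z => ‖((Polynomial.C γ⁻¹ * Polynomial.X : Polynomial ℂ) ^ n).eval z‖)
          '' Metric.sphere (0 : ℂ) ρ = (fun _ => (ρ / ‖γ‖) ^ n) '' Metric.sphere (0:ℂ) ρ from
        Set.image_congr fun z hz => ?_, hne.image_const]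
      have hz : ‖z‖ = ρ := by simpa using hz
      simp only [Polynomial.eval_pow, Polynomial.eval_mul, Polynomial.eval_C,
        Polynomial.eval_X, norm_pow, norm_mul, norm_inv, hz]
      rw [mul_comm, ← div_eq_mul_inv, div_pow]
    rw [himg, csSup_singleton]
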